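/- For all c ∈ [0,1], r ∈ (0,1), and τ > 0: ((1 + √((1−2r)² + 4r(1−r)c²))/2)^{1/(rτ+1−r)} ≥ c^{2/(1+τ)}, with equality only if c = 1. (This says the computation-time-adjusted convergence rate of the random-scan Gibbs chain, ρ_R(r)^{1/(rτ+1−r)} with ρ_R(r) = (1+√((1−2r)²+4r(1−r)‖C‖²))/2, is never smaller than the adjusted deterministic-scan rate ‖C‖^{2/(1+τ)}.) -/

import Mathlib

set_option maxHeartbeats 1000000

lemma stmt13_aux (c r τ : ℝ) (hc0 : 0 ≤ c) (hc1 : c < 1) (hr0 : 0 < r) (hr1 : r < 1)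
    (hτ : 0 < τ) :
    c ^ ((2 : ℝ) / (1 + τ)) <
      ((1 + Real.sqrt ((1 - 2 * r) ^ 2 + 4 * r * (1 - r) * c ^ 2)) / 2)
        ^ ((1 : ℝ) / (r * τ + 1 - r)) := by
  have hτ1 : (0:ℝ) < 1 + τ := by linarith
  have hden : (0:ℝ) < r * τ + 1 - r := by nlinarith
  have hrr : (0:ℝ) < r * (1 - r) := by nlinarith
  have hA0 : 0 ≤ (1 - 2 * r) ^ 2 + 4 * r * (1 - r) * c ^ 2 := by
    nlinarith [sq_nonneg (1 - 2*r), mul_nonneg hrr.le (sq_nonneg c)]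
  obtain ⟨s, hs0, hs2, hsrw⟩ :
      ∃ s, 0 ≤ s ∧ s ^ 2 = (1 - 2 * r) ^ 2 + 4 * r * (1 - r) * c ^ 2 ∧
        Real.sqrt ((1 - 2 * r) ^ 2 + 4 * r * (1 - r) * c ^ 2) = s :=
    ⟨_, Real.sqrt_nonneg _, Real.sq_sqrt hA0, rfl⟩
  rw [hsrw]
  have hρ0 : (0:ℝ) < (1 + s) / 2 := by linarith
  obtain ⟨α, hα, hα2⟩ : ∃ α : ℝ, α = (r * τ + 1 - r) / (1 + τ) ∧
      α * (1 + τ) = r * τ + 1 - r := ⟨_, rfl, by field_simp⟩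
  have hα0 : 0 < α := by rw [hα]; positivity
  have hα1 : α ≤ 1 := by nlinarith
  -- key strict inequality : (c^2) ^ α < (1+s)/2
  have key : (c ^ 2 : ℝ) ^ (α : ℝ) < (1 + s) / 2 := by
    rcases eq_or_lt_of_le hc0 with h0 | h0
    · rw [← h0]
      rw [show ((0:ℝ)^2) = (0:ℝ) by ring, Real.zero_rpow (ne_of_gt hα0)]
      exact hρ0
    · have hx0 : 0 < c ^ 2 := by positivity
      have hx1 : c ^ 2 < 1 := by nlinarith
      have hgm : (c ^ 2 : ℝ) ^ (α : ℝ) ≤ α * (c ^ 2) + (1 - α) * 1 := by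
        have := Real.geom_mean_le_arith_mean2_weighted (le_of_lt hα0)
          (by linarith : (0:ℝ) ≤ 1 - α) (le_of_lt hx0) zero_le_one (by ring)
        simpa using this
      have habs : |1 - 2 * r| < s := by
        have h' : (1 - 2 * r) ^ 2 < s ^ 2 := by
          rw [hs2]; nlinarith [mul_pos hrr (pow_pos h0 2)]
        calc |1 - 2 * r| = Real.sqrt ((1 - 2 * r) ^ 2) := (Real.sqrt_sq_eq_abs _).symm
          _ < Real.sqrt (s ^ 2) := Real.sqrt_lt_sqrt (sq_nonneg _) h'
          _ = s := Real.sqrt_sq hs0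
      have hq : r * (1 - r) < α * ((1 + s) / 2) := by
        have h3 : α * ((1 + s) / 2) * (1 + τ) = (r * τ + 1 - r) * ((1 + s) / 2) := by
          linear_combination ((1 + s) / 2) * hα2
        have h2 : r * (1 - r) * (1 + τ) < (r * τ + 1 - r) * ((1 + s) / 2) := by
          rcases le_or_gt r (1/2) with h | h
          · have hsgt : 1 - 2 * r < s := lt_of_le_of_lt (le_abs_self _) habs
            have h1 : r * (1 + τ) ≤ r * τ + 1 - r := by linarith
            have e1 : (r * τ + 1 - r) * (1 - r) < (r * τ + 1 - r) * ((1 + s) / 2) :=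
              mul_lt_mul_of_pos_left (by linarith) hden
            have e2 : r * (1 + τ) * (1 - r) ≤ (r * τ + 1 - r) * (1 - r) :=
              mul_le_mul_of_nonneg_right h1 (by linarith)
            nlinarith [e1, e2]
          · have hsgt : 2 * r - 1 < s := by
              have : -(1 - 2 * r) ≤ |1 - 2 * r| := neg_le_abs _
              linarith
            have h1 : (1 - r) * (1 + τ) ≤ r * τ + 1 - r := by nlinarith
            have e1 : (r * τ + 1 - r) * r < (r * τ + 1 - r) * ((1 + s) / 2) :=
              mul_lt_mul_of_pos_left (by linarith) hden
            have e2 : (1 - r) * (1 + τ) * r ≤ (r * τ + 1 - r) * r :=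
              mul_le_mul_of_nonneg_right h1 (by linarith)
            nlinarith [e1, e2]
        have h4 : r * (1 - r) * (1 + τ) < α * ((1 + s) / 2) * (1 + τ) := by
          rw [h3]; exact h2
        exact lt_of_mul_lt_mul_right h4 (le_of_lt hτ1)
      have hprod : ((1 + s) / 2) * (1 - (1 + s) / 2) = r * (1 - r) * (1 - c ^ 2) := by
        linear_combination (-(1:ℝ)/4) * hs2
      have hstep : α * (c ^ 2) + (1 - α) * 1 < (1 + s) / 2 := by
        have h5 := mul_lt_mul_of_pos_right hq (by linarith : (0:ℝ) < 1 - c ^ 2)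
        nlinarith [h5, hprod, hρ0]
      linarith
  -- raise both sides to 1/(r τ + 1 - r)
  have hmono := Real.rpow_lt_rpow (Real.rpow_nonneg (by positivity) _) key
    (by positivity : (0:ℝ) < 1 / (r * τ + 1 - r))
  have hLHS : ((c ^ 2 : ℝ) ^ (α : ℝ)) ^ ((1:ℝ) / (r * τ + 1 - r))
      = c ^ ((2 : ℝ) / (1 + τ)) := by
    rw [← Real.rpow_natCast c 2, ← Real.rpow_mul hc0, ← Real.rpow_mul hc0]
    congr 1
    push_cast
    rw [hα]
    field_simp
  rw [hLHS] at hmono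
  exact hmono

theorem stmt13 (c r τ : ℝ) (hc : c ∈ Set.Icc (0 : ℝ) 1) (hr : r ∈ Set.Ioo (0 : ℝ) 1)
    (hτ : 0 < τ) :
    c ^ ((2 : ℝ) / (1 + τ)) ≤
      ((1 + Real.sqrt ((1 - 2 * r) ^ 2 + 4 * r * (1 - r) * c ^ 2)) / 2)
        ^ ((1 : ℝ) / (r * τ + 1 - r)) ∧
    (((1 + Real.sqrt ((1 - 2 * r) ^ 2 + 4 * r * (1 - r) * c ^ 2)) / 2)
        ^ ((1 : ℝ) / (r * τ + 1 - r)) = c ^ ((2 : ℝ) / (1 + τ)) → c = 1) := by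
  obtain ⟨hc0, hc1⟩ := hc
  obtain ⟨hr0, hr1⟩ := hr
  rcases eq_or_lt_of_le hc1 with h1 | h1
  · subst h1
    have hA : (1 - 2 * r) ^ 2 + 4 * r * (1 - r) * (1:ℝ) ^ 2 = 1 := by ring
    rw [hA, Real.sqrt_one]
    norm_num [Real.one_rpow]
  · constructor
    · exact le_of_lt (stmt13_aux c r τ hc0 h1 hr0 hr1 hτ)
    · intro heq
      exact absurd heq.symm (ne_of_lt (stmt13_aux c r τ hc0 h1 hr0 hr1 hτ))
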